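/- Let U be an ℓ×ℓ complex unitary matrix with spectral decomposition U = Σ_{r=1}^m λ_r F_r. Then for every ℓ×ℓ complex matrix ρ, the Cesàro averages (1/K) Σ_{k=0}^{K-1} (U^k)* ρ U^k converge entrywise, as K → ∞, to Σ_{r=1}^m F_r ρ F_r. -/

import Mathlib

open Matrix Filter Finset

lemma cesaro_aux (μ : ℂ) (h : ‖μ‖ = 1) :
    Filter.Tendsto (fun K : ℕ => (K : ℂ)⁻¹ * ∑ k ∈ Finset.range K, μ ^ k)
      Filter.atTop (nhds (if μ = 1 then 1 else 0)) := by
  by_cases h1 : μ = 1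
  · rw [if_pos h1]
    have hev : ∀ᶠ K : ℕ in atTop,
        (1 : ℂ) = (K : ℂ)⁻¹ * ∑ k ∈ Finset.range K, μ ^ k := by
      filter_upwards [eventually_ge_atTop 1] with K hK
      have hK0 : (K : ℂ) ≠ 0 := Nat.cast_ne_zero.mpr (by omega)
      simp only [h1, one_pow, Finset.sum_const, Finset.card_range, nsmul_eq_mul, mul_one]
      exact (inv_mul_cancel₀ hK0).symm
    exact Filter.Tendsto.congr' hev tendsto_const_nhds
  · rw [if_neg h1]
    have hb : ∀ K : ℕ, ‖(K : ℂ)⁻¹ * ∑ k ∈ Finset.range K, μ ^ k‖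
        ≤ (2 / ‖μ - 1‖) * (K : ℝ)⁻¹ := by
      intro K
      have hgeom : ∑ k ∈ Finset.range K, μ ^ k = (μ ^ K - 1) / (μ - 1) := geom_sum_eq h1 K
      rw [hgeom, norm_mul, norm_div, norm_inv, Complex.norm_natCast]
      have h2 : ‖μ ^ K - 1‖ ≤ 2 := by
        calc ‖μ ^ K - 1‖ ≤ ‖μ ^ K‖ + ‖(1 : ℂ)‖ := norm_sub_le _ _
          _ = 2 := by rw [norm_pow, h]; norm_num
      have hden : 0 < ‖μ - 1‖ := norm_pos_iff.mpr (sub_ne_zero.mpr h1)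
      rw [mul_comm ((2:ℝ) / ‖μ - 1‖) _]
      gcongr
    have hg : Filter.Tendsto (fun K : ℕ => (2 / ‖μ - 1‖) * (K : ℝ)⁻¹) atTop (nhds 0) := by
      have := tendsto_inv_atTop_zero.comp (tendsto_natCast_atTop_atTop (R := ℝ))
      simpa using this.const_mul (2 / ‖μ - 1‖)
    exact squeeze_zero_norm hb hg

theorem cesaro_channel_converges (ℓ m : ℕ) (hℓ : 0 < ℓ)
    (U : Matrix (Fin ℓ) (Fin ℓ) ℂ)
    (hU : U ∈ Matrix.unitaryGroup (Fin ℓ) ℂ)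
    (lam : Fin m → ℂ) (F : Fin m → Matrix (Fin ℓ) (Fin ℓ) ℂ)
    (hdist : Function.Injective lam)
    (hmod : ∀ r, ‖lam r‖ = 1)
    (hherm : ∀ r, (F r)ᴴ = F r)
    (hidem : ∀ r, F r * F r = F r)
    (horth : ∀ r s, r ≠ s → F r * F s = 0)
    (hsum : ∑ r, F r = 1)
    (hspec : U = ∑ r, lam r • F r)
    (ρ : Matrix (Fin ℓ) (Fin ℓ) ℂ) :
    ∀ i j : Fin ℓ,
      Filter.Tendsto
        (fun K : ℕ => (K : ℂ)⁻¹ *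
          (∑ k ∈ Finset.range K, (U ^ k)ᴴ * ρ * U ^ k) i j)
        Filter.atTop
        (nhds ((∑ r, F r * ρ * F r) i j)) := by
  intro i j
  set c : Fin m → Fin m → ℂ := fun r s => (starRingEnd ℂ) (lam r) * lam s with hcdef
  have hconjmul : ∀ r, (starRingEnd ℂ) (lam r) * lam r = 1 := by
    intro r
    rw [mul_comm, Complex.mul_conj, Complex.normSq_eq_norm_sq, hmod]
    norm_num
  have hcmod : ∀ r s, ‖c r s‖ = 1 := by
    intro r s
    show ‖(starRingEnd ℂ) (lam r) * lam s‖ = 1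
    rw [norm_mul, Complex.norm_conj, hmod, hmod, one_mul]
  have hc1 : ∀ r s, c r s = 1 ↔ r = s := by
    intro r s
    constructor
    · intro hcs
      have hcs' : (starRingEnd ℂ) (lam r) * lam s = 1 := hcs
      have hne : (starRingEnd ℂ) (lam r) ≠ 0 := by
        intro h0
        have hz : lam r = 0 := by
          have := congrArg (starRingEnd ℂ) h0
          simpa using this
        have habs := hmod r
        rw [hz] at habs
        simp at habs
      have : lam s = lam r :=
        mul_left_cancel₀ hne (hcs'.trans (hconjmul r).symm)
      exact (hdist this).symm
    · rintro rfl; exact hconjmul r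
  have hpow : ∀ k : ℕ, U ^ k = ∑ s, (lam s ^ k) • F s := by
    intro k
    induction k with
    | zero => simpa using hsum.symm
    | succ n ih =>
      rw [pow_succ, ih, hspec, Finset.sum_mul_sum]
      rw [Finset.sum_congr rfl (fun r _ => Finset.sum_congr rfl
        (fun s _ => smul_mul_smul_comm (lam r ^ n) (F r) (lam s) (F s)))]
      rw [Finset.sum_congr rfl (fun r _ => Finset.sum_eq_single r
        (fun s _ hs => by rw [horth r s (Ne.symm hs), smul_zero])
        (fun h => absurd (Finset.mem_univ r) h))]
      refine Finset.sum_congr rfl fun r _ => ?_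
      rw [hidem r, pow_succ]
  have hpowH : ∀ k : ℕ, (U ^ k)ᴴ = ∑ r, ((starRingEnd ℂ) (lam r) ^ k) • F r := by
    intro k
    rw [hpow k, Matrix.conjTranspose_sum]
    refine Finset.sum_congr rfl fun r _ => ?_
    rw [Matrix.conjTranspose_smul, hherm r, star_pow]
    rfl
  have hterm : ∀ k : ℕ, (U ^ k)ᴴ * ρ * U ^ k
      = ∑ r, ∑ s, (c r s) ^ k • (F r * ρ * F s) := by
    intro k
    rw [hpowH k, hpow k, Finset.sum_mul, Finset.sum_mul]
    refine Finset.sum_congr rfl fun r _ => ?_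
    rw [Matrix.smul_mul, Matrix.smul_mul, Finset.mul_sum, Finset.smul_sum]
    refine Finset.sum_congr rfl fun s _ => ?_
    rw [Matrix.mul_smul, smul_smul, hcdef, mul_pow]
  have key : ∀ K : ℕ, (K : ℂ)⁻¹ *
      (∑ k ∈ Finset.range K, (U ^ k)ᴴ * ρ * U ^ k) i j
      = ∑ r, ∑ s, ((K : ℂ)⁻¹ * ∑ k ∈ Finset.range K, (c r s) ^ k)
          * ((F r * ρ * F s) i j) := by
    intro K
    simp only [hterm, Matrix.sum_apply, Matrix.smul_apply, smul_eq_mul]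
    have swap : ∑ k ∈ Finset.range K, ∑ r, ∑ s, (c r s) ^ k * ((F r * ρ * F s) i j)
        = ∑ r, ∑ s, ∑ k ∈ Finset.range K, (c r s) ^ k * ((F r * ρ * F s) i j) := by
      rw [Finset.sum_comm]
      exact Finset.sum_congr rfl fun r _ => Finset.sum_comm
    rw [swap, Finset.mul_sum]
    refine Finset.sum_congr rfl fun r _ => ?_
    rw [Finset.mul_sum]
    refine Finset.sum_congr rfl fun s _ => ?_
    rw [Finset.mul_sum, Finset.mul_sum, Finset.sum_mul]
    exact Finset.sum_congr rfl fun k _ => by ring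
  have hlim : Filter.Tendsto
      (fun K : ℕ => ∑ r, ∑ s, ((K : ℂ)⁻¹ * ∑ k ∈ Finset.range K, (c r s) ^ k)
          * ((F r * ρ * F s) i j)) atTop
      (nhds (∑ r, ∑ s, (if c r s = 1 then (1:ℂ) else 0) * ((F r * ρ * F s) i j))) := by
    refine tendsto_finset_sum _ fun r _ => tendsto_finset_sum _ fun s _ => ?_
    exact (cesaro_aux (c r s) (hcmod r s)).mul_const _
  have htarget : (∑ r, ∑ s, (if c r s = 1 then (1:ℂ) else 0) * ((F r * ρ * F s) i j))
      = (∑ r, F r * ρ * F r) i j := by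
    rw [Matrix.sum_apply]
    refine Finset.sum_congr rfl fun r _ => ?_
    rw [Finset.sum_eq_single r]
    · rw [if_pos ((hc1 r r).mpr rfl), one_mul]
    · intro s _ hs
      rw [if_neg (fun h => hs ((hc1 r s).mp h).symm), zero_mul]
    · intro h; exact absurd (Finset.mem_univ r) h
  rw [← htarget]
  exact hlim.congr fun K => (key K).symm
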